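/- Let v₁ be a unit vector in ℝ², v₂ = v₁^⊥, v₃ = −(v₁+v₂)/√2, R ∈ SO(2), γ ∈ ℝ, and F = R(I + γ v₁ ⊗ v₂). Then f(F) = γ², where f(F) = max{ (|Fv₁|² − 1)₊, (|Fv₂|² − 1)₊, χ(max{|Fv₃|, |Fv₃^⊥|}) } with χ(z) = ((2z² − 1)₊^{1/2} − 1)₊². -/

import Mathlib

noncomputable section

def dot2 (a b : Fin 2 → ℝ) : ℝ := a 0 * b 0 + a 1 * b 1

def norm2 (a : Fin 2 → ℝ) : ℝ := Real.sqrt (dot2 a a)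

def perp (a : Fin 2 → ℝ) : Fin 2 → ℝ := ![-(a 1), a 0]

def chi (z : ℝ) : ℝ := (max (Real.sqrt (max (2 * z^2 - 1) 0) - 1) 0)^2

/-- Membership in SO(2). -/
def IsSO2 (R : Matrix (Fin 2) (Fin 2) ℝ) : Prop := R * R.transpose = 1 ∧ R.det = 1

set_option maxHeartbeats 1000000 in
theorem stmt9 (v₁ : Fin 2 → ℝ) (hv₁ : norm2 v₁ = 1)
    (v₂ : Fin 2 → ℝ) (hv₂ : v₂ = perp v₁)
    (v₃ : Fin 2 → ℝ) (hv₃ : v₃ = fun i => -(v₁ i + v₂ i) / Real.sqrt 2)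
    (R : Matrix (Fin 2) (Fin 2) ℝ) (hR : IsSO2 R) (γ : ℝ)
    (F : Matrix (Fin 2) (Fin 2) ℝ)
    (hF : F = R * (1 + γ • Matrix.vecMulVec v₁ v₂)) :
    max (max (max ((norm2 (F.mulVec v₁))^2 - 1) 0)
        (max ((norm2 (F.mulVec v₂))^2 - 1) 0))
        (chi (max (norm2 (F.mulVec v₃)) (norm2 (F.mulVec (perp v₃))))) = γ^2 := by
  obtain ⟨hRo, _⟩ := hR
  have hcol : R.transpose * R = 1 := mul_eq_one_comm.mp hRo
  have e00 : R 0 0 * R 0 0 + R 1 0 * R 1 0 = 1 := by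
    have := congrFun (congrFun hcol 0) 0
    simpa [Matrix.mul_apply, Fin.sum_univ_two, Matrix.one_apply] using this
  have e01 : R 0 0 * R 0 1 + R 1 0 * R 1 1 = 0 := by
    have := congrFun (congrFun hcol 0) 1
    simpa [Matrix.mul_apply, Fin.sum_univ_two, Matrix.one_apply] using this
  have e11 : R 0 1 * R 0 1 + R 1 1 * R 1 1 = 1 := by
    have := congrFun (congrFun hcol 1) 1
    simpa [Matrix.mul_apply, Fin.sum_univ_two, Matrix.one_apply] using this
  have hdnn : ∀ x : Fin 2 → ℝ, 0 ≤ dot2 x x := by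
    intro x; unfold dot2; exact add_nonneg (mul_self_nonneg _) (mul_self_nonneg _)
  have hp : v₁ 0 * v₁ 0 + v₁ 1 * v₁ 1 = 1 := by
    have := Real.sqrt_eq_one.mp hv₁
    simpa [dot2] using this
  have hRiso : ∀ x : Fin 2 → ℝ, dot2 (R.mulVec x) (R.mulVec x) = dot2 x x := by
    intro x
    simp only [dot2, Matrix.mulVec, dotProduct, Fin.sum_univ_two]
    linear_combination (x 0)^2 * e00 + 2*(x 0)*(x 1)*e01 + (x 1)^2 * e11
  have hFw : ∀ w : Fin 2 → ℝ,
      F.mulVec w = R.mulVec (fun i => w i + γ * dot2 v₂ w * v₁ i) := by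
    intro w
    rw [hF, ← Matrix.mulVec_mulVec]
    congr 1
    funext i
    simp only [Matrix.mulVec, dotProduct, Fin.sum_univ_two, Matrix.add_apply,
      Matrix.one_apply, Matrix.smul_apply, Matrix.vecMulVec_apply, smul_eq_mul, dot2]
    fin_cases i <;> simp <;> ring
  have key : ∀ w : Fin 2 → ℝ, norm2 (F.mulVec w) ^ 2
      = dot2 w w + 2*γ*(dot2 v₂ w)*(dot2 v₁ w) + γ^2 * (dot2 v₂ w)^2 := by
    intro w
    have h0 : norm2 (F.mulVec w) ^ 2 = dot2 (F.mulVec w) (F.mulVec w) :=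
      Real.sq_sqrt (hdnn _)
    rw [h0, hFw w, hRiso]
    simp only [dot2]
    linear_combination (γ * (v₂ 0 * w 0 + v₂ 1 * w 1))^2 * hp
  -- basic dot products
  have hm : Real.sqrt 2 * Real.sqrt 2 = 2 := Real.mul_self_sqrt (by norm_num)
  have s0 : (0:ℝ) < Real.sqrt 2 := Real.sqrt_pos.mpr (by norm_num)
  have d21 : dot2 v₂ v₁ = 0 := by simp only [dot2, hv₂, perp]; simp; ring
  have d11 : dot2 v₁ v₁ = 1 := by simpa [dot2] using hp
  have d12 : dot2 v₁ v₂ = 0 := by simp only [dot2, hv₂, perp]; simp; ring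
  have d22 : dot2 v₂ v₂ = 1 := by
    simp only [dot2, hv₂, perp]; simp; linear_combination hp
  have dsym : ∀ a b : Fin 2 → ℝ, dot2 a b = dot2 b a := by intro a b; unfold dot2; ring
  have hdot3 : ∀ a : Fin 2 → ℝ, dot2 a v₃ = -(dot2 a v₁ + dot2 a v₂)/Real.sqrt 2 := by
    intro a; rw [hv₃]; simp only [dot2]; ring
  have hdotp3 : ∀ a : Fin 2 → ℝ,
      dot2 a (perp v₃) = (dot2 (perp a) v₁ + dot2 (perp a) v₂)/Real.sqrt 2 := by
    intro a; rw [hv₃]; simp only [dot2, perp]; simp; ring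
  have hpp2 : dot2 (perp v₂) v₁ = -1 ∧ dot2 (perp v₂) v₂ = 0 := by
    constructor
    · rw [hv₂]; simp only [dot2, perp]; simp; linear_combination -hp
    · rw [hv₂]; simp only [dot2, perp]; simp; ring
  have hpp1a : dot2 (perp v₁) v₁ = 0 := by rw [← hv₂]; exact d21
  have hpp1b : dot2 (perp v₁) v₂ = 1 := by rw [← hv₂]; exact d22
  have d23 : dot2 v₂ v₃ = -1 / Real.sqrt 2 := by
    rw [hdot3, d21, d22] <;> ring
  have d13 : dot2 v₁ v₃ = -1 / Real.sqrt 2 := by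
    rw [hdot3, d11, d12] <;> ring
  have d33 : dot2 v₃ v₃ = 1 := by
    rw [hdot3, dsym v₃ v₁, dsym v₃ v₂, d13, d23]
    field_simp
    linear_combination -hm
  have d2p3 : dot2 v₂ (perp v₃) = -1 / Real.sqrt 2 := by
    rw [hdotp3, hpp2.1, hpp2.2] <;> ring
  have d1p3 : dot2 v₁ (perp v₃) = 1 / Real.sqrt 2 := by
    rw [hdotp3, hpp1a, hpp1b] <;> ring
  have hppp3 : dot2 (perp (perp v₃)) v₁ = 1 / Real.sqrt 2 ∧
      dot2 (perp (perp v₃)) v₂ = 1 / Real.sqrt 2 := by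
    have h1 : ∀ b : Fin 2 → ℝ, dot2 (perp (perp v₃)) b = -(dot2 v₃ b) := by
      intro b; simp only [dot2, perp]; simp; ring
    rw [h1, h1, dsym v₃ v₁, dsym v₃ v₂, d13, d23]
    exact ⟨by ring, by ring⟩
  have dp3p3 : dot2 (perp v₃) (perp v₃) = 1 := by
    rw [hdotp3, hppp3.1, hppp3.2]
    field_simp
    linear_combination -hm
  -- the four norms
  have n1 : norm2 (F.mulVec v₁) ^ 2 = 1 := by
    rw [key, d21, d11] <;> ring
  have n2 : norm2 (F.mulVec v₂) ^ 2 = 1 + γ^2 := by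
    rw [key, d22, d12] <;> ring
  have n3 : norm2 (F.mulVec v₃) ^ 2 = 1 + γ + γ^2/2 := by
    rw [key, d23, d13, d33]
    field_simp
    linear_combination (-(2*γ+γ^2)) * hm
  have n4 : norm2 (F.mulVec (perp v₃)) ^ 2 = 1 - γ + γ^2/2 := by
    rw [key, d2p3, d1p3, dp3p3]
    field_simp
    linear_combination (2*γ-γ^2) * hm
    try ring
  have hnn : ∀ w : Fin 2 → ℝ, 0 ≤ norm2 w := fun w => Real.sqrt_nonneg _
  have N3 : norm2 (F.mulVec v₃) = Real.sqrt (1 + γ + γ^2/2) := by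
    have h := Real.sqrt_sq (hnn (F.mulVec v₃))
    rw [n3] at h
    exact h.symm
  have N4 : norm2 (F.mulVec (perp v₃)) = Real.sqrt (1 - γ + γ^2/2) := by
    have h := Real.sqrt_sq (hnn (F.mulVec (perp v₃)))
    rw [n4] at h
    exact h.symm
  have hA : (0:ℝ) ≤ 1 + γ + γ^2/2 := by linarith [sq_nonneg (1+γ)]
  have hB : (0:ℝ) ≤ 1 - γ + γ^2/2 := by linarith [sq_nonneg (1-γ)]
  have hchi : chi (max (norm2 (F.mulVec v₃)) (norm2 (F.mulVec (perp v₃)))) = γ^2 := by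
    rw [N3, N4]
    rcases le_total 0 γ with h | h
    · rw [max_eq_left (Real.sqrt_le_sqrt (by linarith))]
      unfold chi
      rw [Real.sq_sqrt hA]
      have h1 : max (2 * (1 + γ + γ^2/2) - 1) 0 = (1+γ)^2 := by
        rw [max_eq_left (by linarith [sq_nonneg (1+γ)])]; ring
      rw [h1, Real.sqrt_sq (by linarith)]
      rw [show (1:ℝ)+γ-1 = γ by ring, max_eq_left h]
    · rw [max_eq_right (Real.sqrt_le_sqrt (by linarith))]
      unfold chi
      rw [Real.sq_sqrt hB]
      have h1 : max (2 * (1 - γ + γ^2/2) - 1) 0 = (1-γ)^2 := by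
        rw [max_eq_left (by linarith [sq_nonneg (1-γ)])]; ring
      rw [h1, Real.sqrt_sq (by linarith)]
      rw [show (1:ℝ)-γ-1 = -γ by ring, max_eq_left (by linarith)]
      ring
  rw [hchi, n1, n2]
  rw [show (1:ℝ) - 1 = 0 by ring, show (1:ℝ) + γ^2 - 1 = γ^2 by ring,
    max_eq_left (sq_nonneg γ), max_self, max_eq_right (sq_nonneg γ), max_self]
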